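/- Let Ξ: A → U be a random function between finite nonempty sets. If for some k ≥ 1 the k-fold random function Ξ^(k): A → U^k is invertible, then for every ε > 0 there exists k_ε such that for all k ≥ k_ε there is a random function Γ: U^k → A, independent of Ξ^(k), with P[γ(ξ_a^(k)) = a] > 1 − ε for every a ∈ A. -/

import Mathlib

open Finset

private lemma exp_prod' {U : Type*} [Fintype U] {k : ℕ} (q : U → ℝ) (h : Fin k → U → ℝ) :
    ∑ v : Fin k → U, ∏ i, (q (v i) * h i (v i)) = ∏ i : Fin k, ∑ u, q u * h i u := by
  classical
  rw [Finset.prod_univ_sum, Fintype.piFinset_univ]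

private lemma second_moment {U : Type*} [Fintype U] (k : ℕ) (q : U → ℝ)
    (hq0 : ∀ u, 0 ≤ q u) (hq1 : ∑ u, q u = 1) (f : U → ℝ)
    (hf : ∀ u, f u ^ 2 ≤ 1) (hmean : ∑ u, q u * f u = 0) :
    ∑ v : Fin k → U, (∏ i, q (v i)) * (∑ i, f (v i)) ^ 2 ≤ k := by
  classical
  have key : ∀ (i j : Fin k) (hij : i ≠ j),
      ∑ v : Fin k → U, (∏ l, q (v l)) * (f (v i) * f (v j)) = 0 := by
    intro i j hij
    set h : Fin k → U → ℝ := fun l x => if l = i then f x else if l = j then f x else 1 with hh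
    have e1 : ∀ v : Fin k → U, (∏ l, q (v l)) * (f (v i) * f (v j))
        = ∏ l, (q (v l) * h l (v l)) := by
      intro v
      rw [Finset.prod_mul_distrib]
      congr 1
      have e2 : ∏ l, h l (v l) = ∏ l ∈ ({i, j} : Finset (Fin k)), h l (v l) := by
        refine (Finset.prod_subset (Finset.subset_univ _) ?_).symm
        intro l _ hl
        simp only [Finset.mem_insert, Finset.mem_singleton, not_or] at hl
        simp [hh, hl.1, hl.2]
      rw [e2, Finset.prod_pair hij]
      simp [hh, hij, Ne.symm hij]
    rw [Finset.sum_congr rfl fun v _ => e1 v, exp_prod']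
    apply Finset.prod_eq_zero (Finset.mem_univ i)
    simp [hh, hmean]
  have diag : ∀ i : Fin k, ∑ v : Fin k → U, (∏ l, q (v l)) * (f (v i) * f (v i)) ≤ 1 := by
    intro i
    set h : Fin k → U → ℝ := fun l x => if l = i then f x * f x else 1 with hh
    have e1 : ∀ v : Fin k → U, (∏ l, q (v l)) * (f (v i) * f (v i))
        = ∏ l, (q (v l) * h l (v l)) := by
      intro v
      rw [Finset.prod_mul_distrib]
      congr 1
      simp [hh]
    rw [Finset.sum_congr rfl fun v _ => e1 v, exp_prod']
    have e3 : ∀ l : Fin k, ∑ u, q u * h l u = if l = i then ∑ u, q u * (f u * f u) else 1 := by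
      intro l
      by_cases hl : l = i <;> simp [hh, hl, hq1]
    rw [Finset.prod_congr rfl fun l _ => e3 l]
    rw [Finset.prod_ite_eq' Finset.univ i fun _ => ∑ u, q u * (f u * f u)]
    simp only [Finset.mem_univ, if_true]
    calc ∑ u, q u * (f u * f u) ≤ ∑ u, q u * 1 := by
          refine Finset.sum_le_sum fun u _ => mul_le_mul_of_nonneg_left ?_ (hq0 u)
          have := hf u; nlinarith [hf u]
      _ = 1 := by simp [hq1]
  calc ∑ v : Fin k → U, (∏ i, q (v i)) * (∑ i, f (v i)) ^ 2
      = ∑ v : Fin k → U, ∑ i, ∑ j, (∏ l, q (v l)) * (f (v i) * f (v j)) := by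
        refine Finset.sum_congr rfl fun v _ => ?_
        rw [sq, Finset.sum_mul_sum, Finset.mul_sum]
        exact Finset.sum_congr rfl fun i _ => by rw [Finset.mul_sum]
    _ = ∑ i, ∑ j, ∑ v : Fin k → U, (∏ l, q (v l)) * (f (v i) * f (v j)) := by
        rw [Finset.sum_comm]
        exact Finset.sum_congr rfl fun i _ => Finset.sum_comm
    _ = ∑ i : Fin k, ∑ v : Fin k → U, (∏ l, q (v l)) * (f (v i) * f (v i)) := by
        refine Finset.sum_congr rfl fun i _ => ?_
        exact Finset.sum_eq_single i (fun j _ hj => key i j (Ne.symm hj)) (by simp)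
    _ ≤ ∑ _i : Fin k, (1 : ℝ) := Finset.sum_le_sum fun i _ => diag i
    _ = k := by simp

private lemma sum_w'' {U : Type*} [Fintype U] (k : ℕ) (q : U → ℝ) (hq1 : ∑ u, q u = 1) :
    ∑ v : Fin k → U, ∏ i, q (v i) = 1 := by
  have := exp_prod' (k := k) q (fun _ _ => (1 : ℝ))
  simpa [hq1] using this

private lemma cheby {U : Type*} [Fintype U] [DecidableEq U] (k : ℕ) (q : U → ℝ)
    (hq0 : ∀ u, 0 ≤ q u) (hq1 : ∑ u, q u = 1) (u : U) (t : ℝ) (ht : 0 < t) :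
    ∑ v ∈ Finset.univ.filter
        (fun v : Fin k → U => t ≤ |(∑ i, (if v i = u then (1:ℝ) else 0)) - k * q u|),
      (∏ i, q (v i)) ≤ k / t ^ 2 := by
  classical
  set f : U → ℝ := fun x => (if x = u then (1 : ℝ) else 0) - q u with hf
  have hqu0 : 0 ≤ q u := hq0 u
  have hqu1 : q u ≤ 1 := by
    rw [← hq1]
    exact Finset.single_le_sum (fun x _ => hq0 x) (Finset.mem_univ u)
  have hfsq : ∀ x, f x ^ 2 ≤ 1 := by
    intro x; by_cases hx : x = u <;> simp [hf, hx] <;> rw [abs_le] <;>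
      constructor <;> linarith
  have hmean : ∑ x, q x * f x = 0 := by
    simp only [hf, mul_sub, Finset.sum_sub_distrib, mul_ite, mul_one, mul_zero]
    rw [Finset.sum_ite_eq' Finset.univ u q, ← Finset.sum_mul, hq1]
    simp
  have hsum : ∀ v : Fin k → U,
      (∑ i, (if v i = u then (1:ℝ) else 0)) - k * q u = ∑ i, f (v i) := by
    intro v
    simp [hf, Finset.sum_sub_distrib, mul_comm]
  have hM := second_moment k q hq0 hq1 f hfsq hmean
  have step : ∑ v ∈ Finset.univ.filter
        (fun v : Fin k → U => t ≤ |(∑ i, (if v i = u then (1:ℝ) else 0)) - k * q u|),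
      (∏ i, q (v i)) * t ^ 2 ≤ k := by
    calc ∑ v ∈ Finset.univ.filter
          (fun v : Fin k → U => t ≤ |(∑ i, (if v i = u then (1:ℝ) else 0)) - k * q u|),
        (∏ i, q (v i)) * t ^ 2
        ≤ ∑ v ∈ Finset.univ.filter
          (fun v : Fin k → U => t ≤ |(∑ i, (if v i = u then (1:ℝ) else 0)) - k * q u|),
        (∏ i, q (v i)) * (∑ i, f (v i)) ^ 2 := by
          refine Finset.sum_le_sum fun v hv => ?_
          rw [Finset.mem_filter] at hv
          refine mul_le_mul_of_nonneg_left ?_ (Finset.prod_nonneg fun i _ => hq0 _)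
          have h1 : t ^ 2 ≤ |(∑ i, (if v i = u then (1:ℝ) else 0)) - k * q u| ^ 2 :=
            pow_le_pow_left₀ ht.le hv.2 2
          rwa [hsum v, sq_abs] at h1
      _ ≤ ∑ v : Fin k → U, (∏ i, q (v i)) * (∑ i, f (v i)) ^ 2 := by
          refine Finset.sum_le_sum_of_subset_of_nonneg (Finset.filter_subset _ _) ?_
          intro v _ _
          exact mul_nonneg (Finset.prod_nonneg fun i _ => hq0 _) (sq_nonneg _)
      _ ≤ k := hM
  rw [← Finset.sum_mul] at step
  rw [le_div_iff₀ (by positivity)]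
  exact step

/-- If for some `k₀ ≥ 1` the `k₀`-fold random function `Ξ^(k₀)` is
invertible, then for every `ε > 0` there is `kε` such that for all `k ≥ kε` there is a
random function `Γ : U^k → A` returning every `a` with probability `> 1 - ε`. -/
theorem stmt1 {A U : Type*} [Fintype A] [Fintype U] [Nonempty A] [Nonempty U]
    (p : A → U → ℝ) (hp0 : ∀ a u, 0 ≤ p a u) (hp1 : ∀ a, ∑ u, p a u = 1)
    (h : ∃ k0 : ℕ, 1 ≤ k0 ∧ ∃ g : (Fin k0 → U) → A → ℝ,
        (∀ v x, 0 ≤ g v x) ∧ (∀ v, ∑ x, g v x = 1) ∧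
        ∀ a x, x ≠ a →
          ∑ v : Fin k0 → U, (∏ i, p a (v i)) * g v x <
            ∑ v : Fin k0 → U, (∏ i, p a (v i)) * g v a) :
    ∀ ε : ℝ, 0 < ε → ∃ kε : ℕ, ∀ k : ℕ, kε ≤ k →
      ∃ g : (Fin k → U) → A → ℝ,
        (∀ v x, 0 ≤ g v x) ∧ (∀ v, ∑ x, g v x = 1) ∧
        ∀ a, 1 - ε < ∑ v : Fin k → U, (∏ i, p a (v i)) * g v a := by
  classical
  intro ε hε
  -- the distributions are pairwise distinct
  have hdist : ∀ a b : A, a ≠ b → p a ≠ p b := by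
    obtain ⟨k0, _, g, _, _, hglt⟩ := h
    intro a b hab hpab
    have h1 := hglt a b (Ne.symm hab)
    have h2 := hglt b a hab
    rw [hpab] at h1
    exact lt_asymm h1 h2
  -- a uniform separation constant δ
  obtain ⟨δ, hδ, hsep⟩ :
      ∃ δ : ℝ, 0 < δ ∧ ∀ a b : A, a ≠ b → ∃ u, δ ≤ |p a u - p b u| := by
    set s : Finset (A × A) := Finset.univ.filter (fun q => q.1 ≠ q.2) with hs
    by_cases hne : s.Nonempty
    · refine ⟨s.inf' hne (fun q => Finset.univ.sup' Finset.univ_nonempty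
        (fun u => |p q.1 u - p q.2 u|)), ?_, ?_⟩
      · rw [Finset.lt_inf'_iff]
        intro q hq
        rw [Finset.mem_filter] at hq
        have : p q.1 ≠ p q.2 := hdist _ _ hq.2
        obtain ⟨u, hu⟩ : ∃ u, p q.1 u ≠ p q.2 u := by
          by_contra hc; push_neg at hc; exact this (funext hc)
        rw [Finset.lt_sup'_iff]
        exact ⟨u, Finset.mem_univ u, abs_sub_pos.2 hu⟩
      · intro a b hab
        have hmem : (a, b) ∈ s := by simp [hs, hab]
        obtain ⟨u, _, hu⟩ := Finset.exists_mem_eq_sup' Finset.univ_nonempty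
          (fun u => |p a u - p b u|)
        exact ⟨u, hu ▸ Finset.inf'_le _ hmem⟩
    · refine ⟨1, one_pos, fun a b hab => absurd ⟨(a, b), by simp [hs, hab]⟩ hne⟩
  refine ⟨⌈4 * (Fintype.card U) / (ε * δ ^ 2)⌉₊ + 1, ?_⟩
  intro k hk
  have hk1 : 1 ≤ k := le_trans (Nat.le_add_left 1 _) hk
  have hk0 : (0 : ℝ) < k := by exact_mod_cast hk1
  have hkR : 4 * (Fintype.card U : ℝ) / (ε * δ ^ 2) < k := by
    calc 4 * (Fintype.card U : ℝ) / (ε * δ ^ 2)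
        ≤ (⌈4 * (Fintype.card U : ℝ) / (ε * δ ^ 2)⌉₊ : ℝ) := Nat.le_ceil _
      _ < k := by exact_mod_cast hk
  -- counting and the decoder
  set cnt : (Fin k → U) → U → ℝ := fun v u => ∑ i, (if v i = u then (1:ℝ) else 0) with hcnt
  set D : (Fin k → U) → A → ℝ := fun v b =>
    Finset.univ.sup' Finset.univ_nonempty (fun u => |cnt v u - k * p b u|) with hD
  have hmin : ∀ v : Fin k → U, ∃ b : A, ∀ b', D v b ≤ D v b' := by
    intro v
    obtain ⟨b, _, hb⟩ := Finset.exists_min_image Finset.univ (D v) Finset.univ_nonempty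
    exact ⟨b, fun b' => hb b' (Finset.mem_univ _)⟩
  set dec : (Fin k → U) → A := fun v => (hmin v).choose with hdecdef
  have hdec : ∀ v b', D v (dec v) ≤ D v b' := fun v => (hmin v).choose_spec
  refine ⟨fun v x => if x = dec v then 1 else 0, fun v x => by positivity,
    fun v => by simp, ?_⟩
  intro a
  set w : (Fin k → U) → ℝ := fun v => ∏ i, p a (v i) with hw
  have hw0 : ∀ v, 0 ≤ w v := fun v => Finset.prod_nonneg fun i _ => hp0 _ _
  have hw1 : ∑ v : Fin k → U, w v = 1 := sum_w'' k (p a) (hp1 a)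
  set Gp : (Fin k → U) → Prop := fun v => ∀ u, |cnt v u - k * p a u| < k * δ / 2 with hGp
  -- on the good event the decoder returns a
  have hcorrect : ∀ v : Fin k → U, Gp v → dec v = a := by
    intro v hv
    have hDa : D v a < k * δ / 2 := by
      rw [hD]
      rw [Finset.sup'_lt_iff]
      exact fun u _ => hv u
    by_contra hne
    have hb : k * δ / 2 < D v (dec v) := by
      obtain ⟨u, hu⟩ := hsep a (dec v) (Ne.symm hne)
      have h1 : k * δ ≤ |k * p a u - k * p (dec v) u| := by
        rw [← mul_sub, abs_mul, abs_of_nonneg hk0.le]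
        exact mul_le_mul_of_nonneg_left hu hk0.le
      have h2 : |k * p a u - k * p (dec v) u|
          ≤ |cnt v u - k * p a u| + |cnt v u - k * p (dec v) u| := by
        have := abs_sub (cnt v u - k * p (dec v) u) (cnt v u - k * p a u)
        calc |k * p a u - k * p (dec v) u|
            = |(cnt v u - k * p (dec v) u) - (cnt v u - k * p a u)| := by ring_nf
          _ ≤ |cnt v u - k * p (dec v) u| + |cnt v u - k * p a u| := abs_sub _ _
          _ = _ := add_comm _ _
      have h3 : |cnt v u - k * p (dec v) u| ≤ D v (dec v) := by
        exact Finset.le_sup' (fun u => |cnt v u - (k:ℝ) * p (dec v) u|) (Finset.mem_univ u)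
      have h4 := hv u
      linarith
    exact absurd (hdec v a) (not_le.2 (lt_trans hDa hb))
  have hsplit := Finset.sum_filter_add_sum_filter_not Finset.univ Gp w
  rw [hw1] at hsplit
  have hbadle : ∑ v ∈ Finset.univ.filter (fun v => ¬ Gp v), w v
      ≤ (Fintype.card U : ℝ) * ((k : ℝ) / (k * δ / 2) ^ 2) := by
    have hstep1 : ∀ v ∈ Finset.univ.filter (fun v => ¬ Gp v),
        w v ≤ ∑ u : U, (if k * δ / 2 ≤ |cnt v u - k * p a u| then w v else 0) := by
      intro v hv
      rw [Finset.mem_filter] at hv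
      obtain ⟨u, hu⟩ : ∃ u, k * δ / 2 ≤ |cnt v u - k * p a u| := by
        have h5 := hv.2
        simp only [hGp] at h5
        push_neg at h5
        exact h5
      have := Finset.single_le_sum
        (f := fun u : U => if k * δ / 2 ≤ |cnt v u - k * p a u| then w v else 0)
        (fun x _ => by split
                       · exact hw0 v
                       · exact le_refl 0) (Finset.mem_univ u)
      rwa [if_pos hu] at this
    calc ∑ v ∈ Finset.univ.filter (fun v => ¬ Gp v), w v
        ≤ ∑ v ∈ Finset.univ.filter (fun v => ¬ Gp v),
            ∑ u : U, (if k * δ / 2 ≤ |cnt v u - k * p a u| then w v else 0) :=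
          Finset.sum_le_sum hstep1
      _ = ∑ u : U, ∑ v ∈ Finset.univ.filter (fun v => ¬ Gp v),
            (if k * δ / 2 ≤ |cnt v u - k * p a u| then w v else 0) := Finset.sum_comm
      _ ≤ ∑ u : U, ∑ v : Fin k → U,
            (if k * δ / 2 ≤ |cnt v u - k * p a u| then w v else 0) := by
          refine Finset.sum_le_sum fun u _ => ?_
          refine Finset.sum_le_sum_of_subset_of_nonneg (Finset.filter_subset _ _) ?_
          intro v _ _
          split
          · exact hw0 v
          · exact le_refl 0
      _ = ∑ u : U, ∑ v ∈ Finset.univ.filter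
            (fun v : Fin k → U => k * δ / 2 ≤ |cnt v u - k * p a u|), w v := by
          exact Finset.sum_congr rfl fun u _ => (Finset.sum_filter _ _).symm
      _ ≤ ∑ _u : U, (k : ℝ) / (k * δ / 2) ^ 2 := by
          refine Finset.sum_le_sum fun u _ => ?_
          have hc := cheby k (p a) (hp0 a) (hp1 a) u (k * δ / 2) (by positivity)
          simpa [hcnt, hw] using hc
      _ = (Fintype.card U : ℝ) * ((k : ℝ) / (k * δ / 2) ^ 2) := by
          simp [Finset.sum_const, mul_comm]
  have hgood : ∑ v ∈ Finset.univ.filter Gp, w v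
      ≤ ∑ v : Fin k → U, w v * (if a = dec v then 1 else 0) := by
    calc ∑ v ∈ Finset.univ.filter Gp, w v
        = ∑ v ∈ Finset.univ.filter Gp, w v * (if a = dec v then 1 else 0) := by
          refine Finset.sum_congr rfl fun v hv => ?_
          rw [Finset.mem_filter] at hv
          simp [hcorrect v hv.2]
      _ ≤ ∑ v : Fin k → U, w v * (if a = dec v then 1 else 0) := by
          refine Finset.sum_le_sum_of_subset_of_nonneg (Finset.filter_subset _ _) ?_
          intro v _ _
          have := hw0 v
          split <;> nlinarith
  have hnum : (Fintype.card U : ℝ) * ((k : ℝ) / (k * δ / 2) ^ 2) < ε := by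
    have hUpos : (0 : ℝ) ≤ (Fintype.card U : ℝ) := Nat.cast_nonneg _
    have heq : (k : ℝ) / (k * δ / 2) ^ 2 = 4 / (k * δ ^ 2) := by
      field_simp
      ring
    rw [heq]
    rw [div_lt_iff₀ (by positivity)] at hkR
    rw [show (Fintype.card U : ℝ) * (4 / (k * δ ^ 2))
      = 4 * (Fintype.card U : ℝ) / (k * δ ^ 2) by ring]
    rw [div_lt_iff₀ (by positivity)]
    nlinarith
  linarith
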